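/- Let G be a group, let g ≥ 4, and let a_1,…,a_{g−1}, y be elements of G satisfying: a_i a_j = a_j a_i for |i−j|>1; a_i a_{i+1} a_i = a_{i+1} a_i a_{i+1} for i=1,…,g−2; a_i y = y a_i for i=3,…,g−1; and a_1 y = y a_1^{−1}. Set M = a_1 a_2 ⋯ a_{g−1}, u_1 = a_1 y, u_2 = M u_1^{−1} M^{−1}, and u_3 = M u_2^{−1} M^{−1}. Then u_2 = a_1 a_2 (a_1 y^{−1}) a_2^{−1} a_1^{−1} and u_3 = a_2 a_3 a_1 a_2 (a_1 y) a_2^{−1} a_1^{−1} a_3^{−1} a_2^{−1}. -/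

import Mathlib

/-- Pure word computation in the subgroup generated by `x1, x2, x3, y`. -/
lemma stmt6_word {G : Type*} [Group G] (x1 x2 x3 y : G)
    (h12 : x1 * x2 * x1 = x2 * x1 * x2) (h23 : x2 * x3 * x2 = x3 * x2 * x3)
    (h13 : x1 * x3 = x3 * x1) (h3y : x3 * y = y * x3) (h1y : x1 * y = y * x1⁻¹) :
    (x1 * x2 * x3) * (x1 * y)⁻¹ * (x1 * x2 * x3)⁻¹
      = x1 * x2 * (x1 * y⁻¹) * x2⁻¹ * x1⁻¹ ∧
    (x1 * x2 * x3) * (x1 * x2 * (x1 * y⁻¹) * x2⁻¹ * x1⁻¹)⁻¹ * (x1 * x2 * x3)⁻¹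
      = x2 * x3 * x1 * x2 * (x1 * y) * x2⁻¹ * x1⁻¹ * x3⁻¹ * x2⁻¹ := by
  have hinv12 : x1⁻¹ * x2⁻¹ * x1⁻¹ = x2⁻¹ * x1⁻¹ * x2⁻¹ := by
    have := congrArg Inv.inv h12
    simpa [mul_inv_rev, mul_assoc] using this
  have hinv23 : x2⁻¹ * x3⁻¹ * x2⁻¹ = x3⁻¹ * x2⁻¹ * x3⁻¹ := by
    have := congrArg Inv.inv h23
    simpa [mul_inv_rev, mul_assoc] using this
  have r13 : ∀ z, x3 * (x1 * z) = x1 * (x3 * z) := fun z => by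
    rw [← mul_assoc, ← h13, mul_assoc]
  have r13a : ∀ z, x3 * (x1⁻¹ * z) = x1⁻¹ * (x3 * z) := fun z => by
    have h : x3 * x1⁻¹ = x1⁻¹ * x3 := by
      rw [eq_comm, inv_mul_eq_iff_eq_mul, ← mul_assoc, h13, mul_inv_cancel_right]
    rw [← mul_assoc, h, mul_assoc]
  have r13i : ∀ z, x3⁻¹ * (x1⁻¹ * z) = x1⁻¹ * (x3⁻¹ * z) := fun z => by
    have h : x3⁻¹ * x1⁻¹ = x1⁻¹ * x3⁻¹ := by
      rw [← mul_inv_rev, ← mul_inv_rev, h13]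
    rw [← mul_assoc, h, mul_assoc]
  have r3y : ∀ z, x3 * (y * z) = y * (x3 * z) := fun z => by
    rw [← mul_assoc, h3y, mul_assoc]
  have r3yi : ∀ z, x3 * (y⁻¹ * z) = y⁻¹ * (x3 * z) := fun z => by
    have h : x3 * y⁻¹ = y⁻¹ * x3 := by
      rw [eq_comm, inv_mul_eq_iff_eq_mul, ← mul_assoc, ← h3y, mul_inv_cancel_right]
    rw [← mul_assoc, h, mul_assoc]
  have r1y : ∀ z, y * (x1⁻¹ * z) = x1 * (y * z) := fun z => by
    rw [← mul_assoc, ← h1y, mul_assoc]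
  have r1yi : ∀ z, y⁻¹ * (x1⁻¹ * z) = x1 * (y⁻¹ * z) := fun z => by
    have h : y⁻¹ * x1⁻¹ = x1 * y⁻¹ := by
      rw [← mul_inv_rev, h1y, mul_inv_rev, inv_inv]
    rw [← mul_assoc, h, mul_assoc]
  have r12 : ∀ z, x1 * (x2 * (x1 * z)) = x2 * (x1 * (x2 * z)) := fun z => by
    rw [← mul_assoc, ← mul_assoc, h12, mul_assoc, mul_assoc]
  have r232 : ∀ z, x2 * (x3 * (x2 * z)) = x3 * (x2 * (x3 * z)) := fun z => by
    rw [← mul_assoc, ← mul_assoc, h23, mul_assoc, mul_assoc]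
  have e8 : x3 * x2⁻¹ * x3⁻¹ = x2⁻¹ * x3⁻¹ * x2 := by
    calc x3 * x2⁻¹ * x3⁻¹ = x3 * (x2⁻¹ * x3⁻¹ * x2⁻¹) * x2 := by group
      _ = x3 * (x3⁻¹ * x2⁻¹ * x3⁻¹) * x2 := by rw [hinv23]
      _ = x2⁻¹ * x3⁻¹ * x2 := by group
  have r8 : ∀ z, x3 * (x2⁻¹ * (x3⁻¹ * z)) = x2⁻¹ * (x3⁻¹ * (x2 * z)) := fun z => by
    rw [← mul_assoc, ← mul_assoc, e8, mul_assoc, mul_assoc]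
  have e9 : x2 * x1⁻¹ * x2⁻¹ * x1⁻¹ = x1⁻¹ * x2⁻¹ := by
    calc x2 * x1⁻¹ * x2⁻¹ * x1⁻¹ = x2 * (x1⁻¹ * x2⁻¹ * x1⁻¹) := by group
      _ = x2 * (x2⁻¹ * x1⁻¹ * x2⁻¹) := by rw [hinv12]
      _ = x1⁻¹ * x2⁻¹ := by group
  have r9 : x2 * (x1⁻¹ * (x2⁻¹ * x1⁻¹)) = x1⁻¹ * x2⁻¹ := by
    rw [← mul_assoc, ← mul_assoc]; exact e9
  constructor
  · simp only [mul_inv_rev, inv_inv, mul_assoc]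
    rw [r3yi, r13a, mul_inv_cancel_left, r1yi]
  · simp only [mul_inv_rev, inv_inv, mul_assoc]
    rw [r13, r1y, r12, r232, r13, r3y, ← r13i, r8, r9, r13i, ← r13]

/-- computation of `u₂` and `u₃` from `u₁ = a₁ y` and
`u_{i+1} = M u_i⁻¹ M⁻¹`, where `M = a₁ a₂ ⋯ a_{g-1}`. -/
theorem stmt_6 {G : Type*} [Group G] (g : ℕ) (hg : 4 ≤ g) (a : ℕ → G) (y : G)
    (hA1 : ∀ i j, 1 ≤ i → j ≤ g - 1 → i + 1 < j → a i * a j = a j * a i)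
    (hA2 : ∀ i, 1 ≤ i → i ≤ g - 2 → a i * a (i + 1) * a i = a (i + 1) * a i * a (i + 1))
    (hC1' : ∀ i, 3 ≤ i → i ≤ g - 1 → a i * y = y * a i)
    (hC4' : a 1 * y = y * (a 1)⁻¹)
    (M u1 u2 u3 : G)
    (hM : M = ((List.range' 1 (g - 1)).map a).prod)
    (hu1 : u1 = a 1 * y)
    (hu2 : u2 = M * u1⁻¹ * M⁻¹)
    (hu3 : u3 = M * u2⁻¹ * M⁻¹) :
    u2 = a 1 * a 2 * (a 1 * y⁻¹) * (a 2)⁻¹ * (a 1)⁻¹ ∧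
    u3 = a 2 * a 3 * a 1 * a 2 * (a 1 * y) * (a 2)⁻¹ * (a 1)⁻¹ * (a 3)⁻¹ * (a 2)⁻¹ := by
  set T : G := ((List.range' 4 (g - 4)).map a).prod with hT
  -- decompose M
  have hsplit : List.range' 1 (g - 1) = [1, 2, 3] ++ List.range' 4 (g - 4) := by
    have h3 : g - 1 = 3 + (g - 4) := by omega
    rw [h3, ← List.range'_append_1]
    rfl
  have hMd : M = a 1 * a 2 * a 3 * T := by
    rw [hM, hsplit, List.map_append, List.prod_append]
    simp [mul_assoc]
    rfl
  have hT1 : Commute T (a 1) := by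
    apply Commute.list_prod_left
    intro x hx
    obtain ⟨i, hi, rfl⟩ := List.mem_map.1 hx
    rw [List.mem_range'] at hi
    exact (hA1 1 i le_rfl (by omega) (by omega)).symm
  have hT2 : Commute T (a 2) := by
    apply Commute.list_prod_left
    intro x hx
    obtain ⟨i, hi, rfl⟩ := List.mem_map.1 hx
    rw [List.mem_range'] at hi
    exact (hA1 2 i (by omega) (by omega) (by omega)).symm
  have hTy : Commute T y := by
    apply Commute.list_prod_left
    intro x hx
    obtain ⟨i, hi, rfl⟩ := List.mem_map.1 hx
    rw [List.mem_range'] at hi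
    exact hC1' i (by omega) (by omega)
  -- the word lemma hypotheses
  have h12 := hA2 1 le_rfl (by omega)
  have h23 := hA2 2 (by omega) (by omega)
  have h13 := hA1 1 3 le_rfl (by omega) (by omega)
  have h3y := hC1' 3 le_rfl (by omega)
  have W := stmt6_word (a 1) (a 2) (a 3) y h12 h23 h13 h3y hC4'
  -- u2
  have hu2' : u2 = a 1 * a 2 * (a 1 * y⁻¹) * (a 2)⁻¹ * (a 1)⁻¹ := by
    rw [hu2, hMd, ← W.1, hu1]
    have : a 1 * a 2 * a 3 * T * (a 1 * y)⁻¹ * (a 1 * a 2 * a 3 * T)⁻¹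
        = a 1 * a 2 * a 3 * (T * (a 1 * y)⁻¹ * T⁻¹) * (a 1 * a 2 * a 3)⁻¹ := by
      group
    rw [this, ((hT1.mul_right hTy).inv_right).eq, mul_inv_cancel_right]
  refine ⟨hu2', ?_⟩
  -- u3
  have hcT : Commute T (a 1 * a 2 * (a 1 * y⁻¹) * (a 2)⁻¹ * (a 1)⁻¹)⁻¹ :=
    ((((hT1.mul_right hT2).mul_right (hT1.mul_right hTy.inv_right)).mul_right
      hT2.inv_right).mul_right hT1.inv_right).inv_right
  rw [hu3, hMd, hu2', ← W.2]
  have : a 1 * a 2 * a 3 * T * (a 1 * a 2 * (a 1 * y⁻¹) * (a 2)⁻¹ * (a 1)⁻¹)⁻¹ * (a 1 * a 2 * a 3 * T)⁻¹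
      = a 1 * a 2 * a 3 * (T * (a 1 * a 2 * (a 1 * y⁻¹) * (a 2)⁻¹ * (a 1)⁻¹)⁻¹ * T⁻¹) * (a 1 * a 2 * a 3)⁻¹ := by
    group
  rw [this, hcT.eq, mul_inv_cancel_right]
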